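/- Consider the semi-discrete entropy conservative scheme m_c dτ_c/dt = Σ_{p∈P(c)} L_{pc}·(v_p − v_c), m_c dv_c/dt = −Σ_{p∈P(c)} [ L_{pc}(p_p − p_c) + ‖L_{pc}‖α_p(v_c − v_p) ], m_c dS_c/dt = 0, with nodal values v_p, p_p given by norm-weighted averages over C(p) and α_p chosen so that for every node p: Σ_{c∈C(p)} [ L_{pc}·( p_c(v_c − v_p) + v_c(p_c − p_p) ) − ‖L_{pc}‖ α_p v_c·(v_c − v_p) ] = 0. If the cell total energy satisfies the chain rule m_c dE_c/dt = m_c( −p_c dτ_c/dt + v_c·dv_c/dt + θ_c dS_c/dt ), then the total energy Σ_c m_c E_c is conserved: d/dt Σ_c m_c E_c = 0. -/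
import Mathlib


open scoped RealInnerProductSpace

/-- Nonlinear stability in the energy norm of the semi-discrete entropy
conservative Lagrangian scheme: total energy `Σ_c m_c E_c` is conserved. -/
theorem stmt_8 (d : ℕ) (ι κ : Type*) [Fintype ι] [Fintype κ]
    (Pc : ι → Finset κ) (Cp : κ → Finset ι)
    (hinc : ∀ c p, c ∈ Cp p ↔ p ∈ Pc c)
    (m : ι → ℝ) (hm : ∀ c, 0 < m c)
    (L : ι → κ → EuclideanSpace ℝ (Fin d))
    (v : ι → EuclideanSpace ℝ (Fin d)) (pc θ : ι → ℝ)
    (vp : κ → EuclideanSpace ℝ (Fin d)) (pp α : κ → ℝ)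
    -- nodal values as norm-weighted averages
    (hwpos : ∀ p, 0 < ∑ c ∈ Cp p, ‖L c p‖)
    (hvp : ∀ p, vp p = (∑ c ∈ Cp p, ‖L c p‖)⁻¹ • ∑ c ∈ Cp p, ‖L c p‖ • v c)
    (hpp : ∀ p, pp p = (∑ c ∈ Cp p, ‖L c p‖ * pc c) / (∑ c ∈ Cp p, ‖L c p‖))
    -- semi-discrete scheme (time derivatives at the current instant)
    (τ' S' E' : ι → ℝ) (v' : ι → EuclideanSpace ℝ (Fin d))
    (hτ : ∀ c, m c * τ' c = ∑ p ∈ Pc c, ⟪L c p, vp p - v c⟫)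
    (hv : ∀ c, m c • v' c =
      -∑ p ∈ Pc c, ((pp p - pc c) • L c p + (‖L c p‖ * α p) • (v c - vp p)))
    (hS : ∀ c, m c * S' c = 0)
    -- thermodynamic compatibility condition defining α at each node
    (hα : ∀ p, ∑ c ∈ Cp p,
      (⟪L c p, pc c • (v c - vp p) + (pc c - pp p) • v c⟫
        - ‖L c p‖ * α p * ⟪v c, v c - vp p⟫) = 0)
    -- Gibbs chain rule for the cell total energy
    (hGibbs : ∀ c, m c * E' c =
      m c * (-(pc c) * τ' c + ⟪v c, v' c⟫ + θ c * S' c)) :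
    ∑ c, m c * E' c = 0 := by
  have hS0 : ∀ c, S' c = 0 := fun c =>
    (mul_eq_zero.mp (hS c)).resolve_left (hm c).ne'
  have key : ∀ c, m c * E' c = ∑ p ∈ Pc c,
      (⟪L c p, pc c • (v c - vp p) + (pc c - pp p) • v c⟫
        - ‖L c p‖ * α p * ⟪v c, v c - vp p⟫) := by
    intro c
    have h1 : m c * E' c = -(pc c) * (m c * τ' c) + ⟪v c, m c • v' c⟫ := by
      rw [hGibbs c, hS0 c, real_inner_smul_right]; ring
    rw [h1, hτ c, hv c, inner_neg_right, inner_sum, Finset.mul_sum, ← sub_eq_add_neg,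
      ← Finset.sum_sub_distrib]
    refine Finset.sum_congr rfl fun p _ => ?_
    simp only [inner_add_right, inner_sub_right, inner_sub_left, inner_smul_right,
      inner_smul_left, real_inner_comm (L c p)]
    ring_nf
  calc ∑ c, m c * E' c
      = ∑ c, ∑ p ∈ Pc c,
        (⟪L c p, pc c • (v c - vp p) + (pc c - pp p) • v c⟫
          - ‖L c p‖ * α p * ⟪v c, v c - vp p⟫) := by
        exact Finset.sum_congr rfl fun c _ => key c
    _ = ∑ p, ∑ c ∈ Cp p,
        (⟪L c p, pc c • (v c - vp p) + (pc c - pp p) • v c⟫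
          - ‖L c p‖ * α p * ⟪v c, v c - vp p⟫) := by
        refine Finset.sum_comm' fun c p => ?_
        simp [hinc]
    _ = 0 := by rw [Finset.sum_congr rfl fun p _ => hα p, Finset.sum_const_zero]
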